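/- Let Q be a polynomial with real coefficients, evaluated at complex arguments via its coefficients, let Q′ be its derivative polynomial, and let λ ∈ ℂ. Suppose x, y, z : ℝ → ℂ satisfy, for all s ∈ ℝ: x′(s) = i·Q(x(s)), y′(s) = i·(λ·z(s) − (1/2)·Q′(x(s))·y(s)), and z′(s) = i·(−λ·y(s) − (1/2)·Q′(x(s))·z(s)). Then the function s ↦ Q(x(s))·(y(s)² + z(s)²) is constant on ℝ. -/

import Mathlib

open Polynomial

/-- If `x, y, z : ℝ → ℂ` satisfy `x' = i Q(x)`,
`y' = i (λ z - (1/2) Q'(x) y)` and `z' = i (-λ y - (1/2) Q'(x) z)` with `Q` a real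
polynomial (evaluated on `ℂ`) and `λ ∈ ℂ`, then `s ↦ Q(x s)·(y s² + z s²)` is constant. -/
theorem zeroHopf_conservation_imag_time
    (Q : Polynomial ℝ) (lam : ℂ) (x y z : ℝ → ℂ)
    (hx : ∀ s : ℝ, HasDerivAt x (Complex.I * (Polynomial.aeval (x s)) Q) s)
    (hy : ∀ s : ℝ, HasDerivAt y
      (Complex.I * (lam * z s - (1 / 2) * (Polynomial.aeval (x s)) Q.derivative * y s)) s)
    (hz : ∀ s : ℝ, HasDerivAt z
      (Complex.I * (-(lam * y s) - (1 / 2) * (Polynomial.aeval (x s)) Q.derivative * z s)) s) :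
    ∀ s t : ℝ,
      (Polynomial.aeval (x s)) Q * (y s ^ 2 + z s ^ 2) =
        (Polynomial.aeval (x t)) Q * (y t ^ 2 + z t ^ 2) := by
  have key : ∀ s : ℝ, HasDerivAt
      (fun s => (Polynomial.aeval (x s)) Q * (y s ^ 2 + z s ^ 2)) 0 s := by
    intro s
    have hQ : HasDerivAt (fun s => (Polynomial.aeval (x s)) Q)
        ((Polynomial.aeval (x s)) Q.derivative * (Complex.I * (Polynomial.aeval (x s)) Q)) s :=
      (Q.hasDerivAt_aeval (x s)).comp s (hx s)
    have h2 : HasDerivAt (fun s => y s ^ 2 + z s ^ 2)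
        (2 * y s * (Complex.I * (lam * z s - (1 / 2) * (Polynomial.aeval (x s)) Q.derivative * y s))
          + 2 * z s * (Complex.I * (-(lam * y s) - (1 / 2) * (Polynomial.aeval (x s)) Q.derivative * z s))) s := by
      have h := ((hy s).mul (hy s)).add ((hz s).mul (hz s))
      simp only [← pow_two] at h
      exact h.congr_deriv (by ring)
    have := hQ.mul h2
    exact this.congr_deriv (by ring)
  intro s t
  have : ∀ a b : ℝ, a ≤ b → (fun s => (Polynomial.aeval (x s)) Q * (y s ^ 2 + z s ^ 2)) a
      = (fun s => (Polynomial.aeval (x s)) Q * (y s ^ 2 + z s ^ 2)) b := by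
    intro a b hab
    exact (constant_of_has_deriv_right_zero
      (fun u _ => (key u).continuousAt.continuousWithinAt)
      (fun u _ => (key u).hasDerivWithinAt) b (Set.right_mem_Icc.2 hab)).symm
  rcases le_total s t with h | h
  · exact this s t h
  · exact (this t s h).symm
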